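/- Fix n ≥ 2, m ≥ 1, a > 0, a₁, a₂ ∈ ℝ with a₁² + a₂² ≠ 0, b ∈ ℝ, and c₁,…,cₙ ∈ ℝ with Σ cₖ = 0. Define ξ(x) = Σₖ xₖ, f(x) = a₁·e^{√(a/m)·ξ} + a₂·e^{−√(a/m)·ξ}, and h(x) = −((n−1)a/2)·Σₖ xₖ² + a·Σ_{k<l} xₖxₗ + Σₖ cₖxₖ + b. Then with ρ = −na and λ_F = 4a₁a₂ρ(m−1)/m, the functions f and h satisfy: (i) f·∂²h/∂xᵢ∂xⱼ = m·∂²f/∂xᵢ∂xⱼ for all i ≠ j; (ii) f·∂²h/∂xᵢ² − m·∂²f/∂xᵢ² = ρ·f for all i; (iii) Σₖ [−f·∂²f/∂xₖ² − (m−1)(∂f/∂xₖ)² + f·(∂f/∂xₖ)·(∂h/∂xₖ)] = ρf² − λ_F. -/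

import Mathlib

noncomputable def pd {n : ℕ} (i : Fin n) (f : (Fin n → ℝ) → ℝ) : (Fin n → ℝ) → ℝ :=
  fun x => fderiv ℝ f x (Pi.single i 1)

open Real

noncomputable def sumL (n : ℕ) : (Fin n → ℝ) →L[ℝ] ℝ :=
  ∑ k, ContinuousLinearMap.proj k

noncomputable def prj {n : ℕ} (i : Fin n) : (Fin n → ℝ) →L[ℝ] ℝ :=
  ContinuousLinearMap.proj i

lemma sumL_apply {n : ℕ} (v : Fin n → ℝ) : sumL n v = ∑ k, v k := by
  simp [sumL]

lemma sumL_single {n : ℕ} (i : Fin n) : sumL n (Pi.single i 1) = 1 := by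
  simp [sumL_apply, Pi.single_apply]

lemma prj_single {n : ℕ} (k i : Fin n) :
    prj k (Pi.single i 1) = if k = i then 1 else 0 := by
  simp [prj, Pi.single_apply]

lemma hproj {n : ℕ} (k : Fin n) (x : Fin n → ℝ) :
    HasFDerivAt (fun x : Fin n → ℝ => x k) (prj k) x :=
  (prj k).hasFDerivAt

lemma hasF_sum {n : ℕ} (x : Fin n → ℝ) :
    HasFDerivAt (fun x : Fin n → ℝ => ∑ k, x k) (sumL n) x := by
  have : (fun x : Fin n → ℝ => ∑ k, x k) = ⇑(sumL n) := by
    funext v; rw [sumL_apply]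
  rw [this]; exact (sumL n).hasFDerivAt

lemma hasF_exp {n : ℕ} (a₁ a₂ s : ℝ) (x : Fin n → ℝ) :
    HasFDerivAt (fun x : Fin n → ℝ =>
        a₁ * exp (s * ∑ k, x k) + a₂ * exp (-(s * ∑ k, x k)))
      ((a₁ * s * exp (s * ∑ k, x k) + -(a₂ * s) * exp (-(s * ∑ k, x k))) • sumL n) x := by
  have hL := (hasF_sum x).const_mul s
  have h1 := (hL.exp).const_mul a₁
  have h2 := ((hL.neg).exp).const_mul a₂
  have h3 := h1.fun_add h2
  convert! h3 using 1
  ext v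
  simp [sumL_apply]
  ring

lemma pd_exp {n : ℕ} (i : Fin n) (A₁ A₂ s : ℝ) :
    pd i (fun x : Fin n → ℝ => A₁ * exp (s * ∑ k, x k) + A₂ * exp (-(s * ∑ k, x k)))
      = fun x => (A₁ * s) * exp (s * ∑ k, x k) + (-(A₂ * s)) * exp (-(s * ∑ k, x k)) := by
  funext x
  unfold pd
  rw [(hasF_exp A₁ A₂ s x).fderiv]
  simp [sumL_single]

lemma pair_sum {n : ℕ} (x : Fin n → ℝ) :
    ∑ k, ∑ l, (if k < l then x k * x l else 0)
      = ((∑ k, x k) ^ 2 - ∑ k, (x k) ^ 2) / 2 := by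
  have h1 : (∑ k, x k) ^ 2 = ∑ k : Fin n, ∑ l : Fin n, x k * x l := by
    rw [sq, Finset.sum_mul_sum]
  have h2 : ∀ k l : Fin n, x k * x l =
      (if k < l then x k * x l else 0) + (if l < k then x k * x l else 0)
        + (if k = l then x k * x l else 0) := by
    intro k l
    rcases lt_trichotomy k l with hkl | hkl | hkl
    · simp [hkl, asymm hkl, hkl.ne]
    · simp [hkl, lt_irrefl]
    · simp [hkl, asymm hkl, hkl.ne']
  have h3 : ∑ k : Fin n, ∑ l : Fin n, x k * x l =
      (∑ k : Fin n, ∑ l : Fin n, (if k < l then x k * x l else 0))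
      + (∑ k : Fin n, ∑ l : Fin n, (if l < k then x k * x l else 0))
      + (∑ k : Fin n, ∑ l : Fin n, (if k = l then x k * x l else 0)) := by
    simp_rw [← Finset.sum_add_distrib]
    exact Finset.sum_congr rfl fun k _ => Finset.sum_congr rfl fun l _ => h2 k l
  have h4 : (∑ k : Fin n, ∑ l : Fin n, (if l < k then x k * x l else 0))
      = ∑ k : Fin n, ∑ l : Fin n, (if k < l then x k * x l else 0) := by
    rw [Finset.sum_comm]
    exact Finset.sum_congr rfl fun k _ => Finset.sum_congr rfl fun l _ => by
      rw [mul_comm]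
  have h5 : (∑ k : Fin n, ∑ l : Fin n, (if k = l then x k * x l else 0))
      = ∑ k, (x k) ^ 2 := by
    refine Finset.sum_congr rfl fun k _ => ?_
    rw [Finset.sum_ite_eq]
    simp [sq]
  rw [h4, h5] at h3
  rw [h1] at *
  linarith

lemma hasF_poly {n : ℕ} (A B b : ℝ) (c : Fin n → ℝ) (x : Fin n → ℝ) :
    HasFDerivAt (fun x : Fin n → ℝ =>
        A * ∑ k, (x k) ^ 2 + B * (∑ k, x k) ^ 2 + ∑ k, c k * x k + b)
      (A • (∑ k, (2 * x k) • prj k) + (B * (2 * ∑ k, x k)) • sumL n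
        + ∑ k, (c k) • prj k) x := by
  have hsq : ∀ k : Fin n, HasFDerivAt (fun x : Fin n → ℝ => (x k) ^ 2)
      ((2 * x k) • prj k) x := by
    intro k
    have h := (hproj k x).fun_mul (hproj k x)
    convert! h using 1
    · funext y; ring
    · ext v; simp; ring
  have hS2 : HasFDerivAt (fun x : Fin n → ℝ => ∑ k, (x k) ^ 2)
      (∑ k, (2 * x k) • prj k) x := HasFDerivAt.fun_sum fun k _ => hsq k
  have hQ2 : HasFDerivAt (fun x : Fin n → ℝ => (∑ k, x k) ^ 2)
      ((2 * ∑ k, x k) • sumL n) x := by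
    have h := (hasF_sum x).fun_mul (hasF_sum x)
    convert! h using 1
    · funext y; ring
    · ext v; simp [sumL_apply]; ring
  have hlin : HasFDerivAt (fun x : Fin n → ℝ => ∑ k, c k * x k)
      (∑ k, (c k) • prj k) x :=
    HasFDerivAt.fun_sum fun k _ => (hproj k x).const_mul (c k)
  have h := (((hS2.const_mul A).fun_add (hQ2.const_mul B)).fun_add hlin).add_const b
  convert! h using 1
  ext v
  simp [mul_assoc]
  all_goals ring

lemma pd_poly {n : ℕ} (i : Fin n) (A B b : ℝ) (c : Fin n → ℝ) :
    pd i (fun x : Fin n → ℝ =>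
        A * ∑ k, (x k) ^ 2 + B * (∑ k, x k) ^ 2 + ∑ k, c k * x k + b)
      = fun x => A * (2 * x i) + B * (2 * ∑ k, x k) + c i := by
  funext x
  unfold pd
  rw [(hasF_poly A B b c x).fderiv]
  simp [sumL_single, prj_single, Finset.mul_sum, mul_ite]

lemma pd_affine {n : ℕ} (j i : Fin n) (A B C : ℝ) :
    pd j (fun x : Fin n → ℝ => A * (2 * x i) + B * (2 * ∑ k, x k) + C)
      = fun _ => A * (2 * (if i = j then 1 else 0)) + B * 2 := by
  funext x
  unfold pd
  have h : HasFDerivAt (fun x : Fin n → ℝ => A * (2 * x i) + B * (2 * ∑ k, x k) + C)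
      ((A * 2) • prj i + (B * 2) • sumL n) x := by
    have h1 := ((hproj i x).const_mul 2).const_mul A
    have h2 := ((hasF_sum x).const_mul 2).const_mul B
    have h3 := (h1.fun_add h2).add_const C
    convert! h3 using 1
    ext v
    simp [sumL_apply]
    ring
  rw [h.fderiv]
  simp [sumL_single, prj_single]
  all_goals ring

theorem stmt4 {n m : ℕ} (hn : 2 ≤ n) (hm : 1 ≤ m)
    (a a₁ a₂ b : ℝ) (ha : 0 < a) (ha12 : a₁ ^ 2 + a₂ ^ 2 ≠ 0)
    (c : Fin n → ℝ) (hc : ∑ k, c k = 0)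
    (ρ lamF : ℝ) (hρ : ρ = -(n * a))
    (hlam : lamF = 4 * a₁ * a₂ * ρ * (m - 1) / m)
    (f h : (Fin n → ℝ) → ℝ)
    (hfdef : f = fun x => a₁ * Real.exp (Real.sqrt (a / m) * ∑ k, x k)
      + a₂ * Real.exp (-(Real.sqrt (a / m) * ∑ k, x k)))
    (hhdef : h = fun x => -((n - 1) * a / 2) * ∑ k, (x k) ^ 2
      + a * ∑ k, ∑ l, (if k < l then x k * x l else 0)
      + ∑ k, c k * x k + b) :
    (∀ i j : Fin n, i ≠ j → ∀ x,
      f x * pd j (pd i h) x = (m : ℝ) * pd j (pd i f) x) ∧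
    (∀ i : Fin n, ∀ x,
      f x * pd i (pd i h) x - (m : ℝ) * pd i (pd i f) x = ρ * f x) ∧
    (∀ x, ∑ k, (-(f x * pd k (pd k f) x) - ((m : ℝ) - 1) * (pd k f x) ^ 2
      + f x * pd k f x * pd k h x) = ρ * f x ^ 2 - lamF) := by
  subst hρ hlam hfdef
  set s := Real.sqrt (a / m) with hs
  have hm0 : (m : ℝ) ≠ 0 := by
    have : (1 : ℝ) ≤ (m : ℝ) := by exact_mod_cast hm
    linarith
  have hss' : (m : ℝ) * (s * s) = a := by
    rw [Real.mul_self_sqrt (by positivity)]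
    field_simp
  have hh2 : h = fun x : Fin n → ℝ =>
      (-(n * a / 2)) * ∑ k, (x k) ^ 2 + (a / 2) * (∑ k, x k) ^ 2
        + ∑ k, c k * x k + b := by
    rw [hhdef]
    funext x
    rw [pair_sum]
    push_cast
    ring
  refine ⟨?_, ?_, ?_⟩
  · intro i j hij x
    rw [hh2]
    simp only [pd_poly, pd_affine, pd_exp]
    rw [if_neg hij]
    rw [← hss']
    ring
  · intro i x
    rw [hh2]
    simp only [pd_poly, pd_affine, pd_exp]
    rw [if_pos trivial]
    rw [← hss']
    ring
  · intro x
    rw [hh2]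
    simp only [pd_poly, pd_exp]
    have hE : Real.exp (-(s * ∑ k, x k)) = (Real.exp (s * ∑ k, x k))⁻¹ :=
      Real.exp_neg _
    rw [hE]
    set E := Real.exp (s * ∑ k, x k) with hEdef
    have hE0 : E ≠ 0 := Real.exp_ne_zero _
    set ξ := ∑ k, x k with hxi
    have key : ∀ k : Fin n,
        (-((a₁ * E + a₂ * E⁻¹) * ((a₁ * s * s) * E + (-(-(a₂ * s) * s)) * E⁻¹))
          - ((m : ℝ) - 1) * ((a₁ * s) * E + (-(a₂ * s)) * E⁻¹) ^ 2
          + (a₁ * E + a₂ * E⁻¹) * ((a₁ * s) * E + (-(a₂ * s)) * E⁻¹)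
            * ((-(n * a / 2)) * (2 * x k) + (a / 2) * (2 * ξ) + c k))
        = (-((a₁ * E + a₂ * E⁻¹) * ((a₁ * s * s) * E + (-(-(a₂ * s) * s)) * E⁻¹))
          - ((m : ℝ) - 1) * ((a₁ * s) * E + (-(a₂ * s)) * E⁻¹) ^ 2
          + (a₁ * E + a₂ * E⁻¹) * ((a₁ * s) * E + (-(a₂ * s)) * E⁻¹) * (a * ξ))
          + ((a₁ * E + a₂ * E⁻¹) * ((a₁ * s) * E + (-(a₂ * s)) * E⁻¹) * (-(n * a)))
            * x k
          + ((a₁ * E + a₂ * E⁻¹) * ((a₁ * s) * E + (-(a₂ * s)) * E⁻¹)) * c k := by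
      intro k
      ring
    rw [Finset.sum_congr rfl fun k _ => key k]
    rw [Finset.sum_add_distrib, Finset.sum_add_distrib, Finset.sum_const,
      ← Finset.mul_sum, ← Finset.mul_sum, hc, Finset.card_univ, Fintype.card_fin,
      nsmul_eq_mul, ← hxi]
    rw [← hss']
    field_simp
    ring
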